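/- Let G be a finite simple graph with Ore-degree θ(G) ≤ 7 such that G admits no strong edge-coloring with 13 colors but every proper subgraph of G admits a strong edge-coloring with 13 colors. Then every vertex of degree 2 in G is adjacent to two vertices of degree 4. -/

import Mathlib

/-- Two edges `e` and `f` of a graph `G` *see* each other if they are contained in a
common path or cycle of length at most three, i.e. they share an endpoint or some
endpoint of `e` is adjacent to some endpoint of `f`. -/
def SimpleGraph.Sees {V : Type*} (G : SimpleGraph V) (e f : Sym2 V) : Prop :=
  ∃ u ∈ e, ∃ v ∈ f, u = v ∨ G.Adj u v

/-- `c` is a strong edge-coloring of `G`: edges that see each other get distinct colors. -/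
def SimpleGraph.IsStrongEdgeColoring {V α : Type*} (G : SimpleGraph V) (c : Sym2 V → α) : Prop :=
  ∀ e ∈ G.edgeSet, ∀ f ∈ G.edgeSet, e ≠ f → G.Sees e f → c e ≠ c f

/-- `G` admits a strong edge-coloring with `n` colors. -/
def SimpleGraph.HasStrongColoring {V : Type*} (G : SimpleGraph V) (n : ℕ) : Prop :=
  ∃ c : Sym2 V → Fin n, G.IsStrongEdgeColoring c

open Finset

namespace StrongAux

variable {V : Type*} [Fintype V] [DecidableEq V] (G : SimpleGraph V) [DecidableRel G.Adj]

lemma sees_symm {e f : Sym2 V} (h : G.Sees e f) : G.Sees f e := by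
  obtain ⟨a, ha, b, hb, hab⟩ := h
  exact ⟨b, hb, a, ha, hab.imp Eq.symm fun h' => h'.symm⟩

open scoped Classical in
noncomputable def seers (v : V) (e0 : Sym2 V) : Finset (Sym2 V) :=
  G.edgeFinset.filter fun f => v ∉ f ∧ f ≠ e0 ∧ G.Sees f e0

lemma mem_seers {v : V} {e0 f : Sym2 V} :
    f ∈ seers G v e0 ↔ f ∈ G.edgeSet ∧ v ∉ f ∧ f ≠ e0 ∧ G.Sees f e0 := by
  classical
  simp [seers, SimpleGraph.mem_edgeFinset]

/-- The master extension lemma: patch a partial strong coloring on the two edges at `v`,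
possibly recoloring up to two further edges `r1, r2`. -/
lemma extend4
    (v u w : V) (hvu : G.Adj v u) (hvw : G.Adj v w) (huw : u ≠ w)
    (hNv : ∀ x, G.Adj v x → x = u ∨ x = w)
    (cV : Sym2 V → Fin 13)
    (hcV : ∀ e ∈ G.edgeSet, ∀ f ∈ G.edgeSet, v ∉ e → v ∉ f → e ≠ f → G.Sees e f →
      cV e ≠ cV f)
    (r1 r2 : Sym2 V) (hr1 : r1 ∈ G.edgeSet) (hr2 : r2 ∈ G.edgeSet)
    (hvr1 : v ∉ r1) (hvr2 : v ∉ r2)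
    (A B D1 D2 : Fin 13)
    (hA : ∀ f ∈ seers G v s(v,u), f ≠ r1 → f ≠ r2 → cV f ≠ A)
    (hB : ∀ f ∈ seers G v s(v,w), f ≠ r1 → f ≠ r2 → cV f ≠ B)
    (hAB : A ≠ B)
    (hD1 : ∀ f ∈ seers G v r1, f ≠ r2 → cV f ≠ D1)
    (hD2 : ∀ f ∈ seers G v r2, f ≠ r1 → cV f ≠ D2)
    (hS1u : G.Sees r1 s(v,u) → D1 ≠ A)
    (hS1w : G.Sees r1 s(v,w) → D1 ≠ B)
    (hS2u : G.Sees r2 s(v,u) → D2 ≠ A)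
    (hS2w : G.Sees r2 s(v,w) → D2 ≠ B)
    (hS12 : r1 ≠ r2 → G.Sees r1 r2 → D1 ≠ D2) :
    G.HasStrongColoring 13 := by
  classical
  have hvvu : v ∈ s(v,u) := Sym2.mem_mk_left _ _
  have hvvw : v ∈ s(v,w) := Sym2.mem_mk_left _ _
  have huv_ne_vw : s(v,u) ≠ s(v,w) := by
    intro h
    rw [Sym2.eq_iff] at h
    rcases h with ⟨-, h⟩ | ⟨h, -⟩
    · exact huw h
    · exact hvw.ne' (h ▸ rfl)
  have hr1uv : r1 ≠ s(v,u) := fun h => hvr1 (h ▸ hvvu)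
  have hr1vw : r1 ≠ s(v,w) := fun h => hvr1 (h ▸ hvvw)
  have hr2uv : r2 ≠ s(v,u) := fun h => hvr2 (h ▸ hvvu)
  have hr2vw : r2 ≠ s(v,w) := fun h => hvr2 (h ▸ hvvw)
  set c' : Sym2 V → Fin 13 := fun e =>
    if e = s(v,u) then A else if e = s(v,w) then B
    else if e = r1 then D1 else if e = r2 then D2 else cV e with hc'def
  have eval_uv : c' s(v,u) = A := by simp [hc'def]
  have eval_vw : c' s(v,w) = B := by simp [hc'def, huv_ne_vw.symm]
  have eval_r1 : c' r1 = D1 := by simp [hc'def, hr1uv, hr1vw]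
  have eval_r2 : r2 ≠ r1 → c' r2 = D2 := fun h => by
    simp [hc'def, hr2uv, hr2vw, h]
  have eval_old : ∀ f, f ≠ s(v,u) → f ≠ s(v,w) → f ≠ r1 → f ≠ r2 → c' f = cV f := by
    intro f h1 h2 h3 h4; simp [hc'def, h1, h2, h3, h4]
  have hvmem : ∀ f ∈ G.edgeSet, v ∈ f → f = s(v,u) ∨ f = s(v,w) := by
    intro f hfE hvf
    obtain ⟨x, rfl⟩ := Sym2.mem_iff_exists.mp hvf
    rcases hNv x ((SimpleGraph.mem_edgeSet G).mp hfE) with rfl | rfl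
    · exact Or.inl rfl
    · exact Or.inr rfl
  have hmemS : ∀ e0 : Sym2 V, ∀ f ∈ G.edgeSet, f ≠ s(v,u) → f ≠ s(v,w) → f ≠ e0 →
      G.Sees f e0 → f ∈ seers G v e0 := by
    intro e0 f hfE h1 h2 h3 hs
    refine (mem_seers G).mpr ⟨hfE, ?_, h3, hs⟩
    intro hvf
    rcases hvmem f hfE hvf with h | h
    · exact h1 h
    · exact h2 h
  refine ⟨c', ?_⟩
  intro e he f hf hef hsees
  by_cases he1 : e = s(v,u)
  · rw [he1] at hsees ⊢
    rw [eval_uv]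
    have hef1 : f ≠ s(v,u) := fun h => hef (he1.trans h.symm)
    by_cases hf2 : f = s(v,w)
    · rw [hf2, eval_vw]; exact hAB
    by_cases hf3 : f = r1
    · rw [hf3, eval_r1]
      rw [hf3] at hsees
      exact (hS1u (sees_symm G hsees)).symm
    by_cases hf4 : f = r2
    · rw [hf4, eval_r2 (fun h => hf3 (hf4.trans h))]
      rw [hf4] at hsees
      exact (hS2u (sees_symm G hsees)).symm
    · rw [eval_old f hef1 hf2 hf3 hf4]
      exact (hA f (hmemS s(v,u) f hf hef1 hf2 hef1 (sees_symm G hsees)) hf3 hf4).symm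
  by_cases he2 : e = s(v,w)
  · rw [he2] at hsees ⊢
    rw [eval_vw]
    have hef2 : f ≠ s(v,w) := fun h => hef (he2.trans h.symm)
    by_cases hf1 : f = s(v,u)
    · rw [hf1, eval_uv]; exact hAB.symm
    by_cases hf3 : f = r1
    · rw [hf3, eval_r1]
      rw [hf3] at hsees
      exact (hS1w (sees_symm G hsees)).symm
    by_cases hf4 : f = r2
    · rw [hf4, eval_r2 (fun h => hf3 (hf4.trans h))]
      rw [hf4] at hsees
      exact (hS2w (sees_symm G hsees)).symm
    · rw [eval_old f hf1 hef2 hf3 hf4]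
      exact (hB f (hmemS s(v,w) f hf hf1 hef2 hef2 (sees_symm G hsees)) hf3 hf4).symm
  by_cases he3 : e = r1
  · rw [he3] at hsees ⊢
    rw [eval_r1]
    have hef3 : f ≠ r1 := fun h => hef (he3.trans h.symm)
    by_cases hf1 : f = s(v,u)
    · rw [hf1, eval_uv]
      rw [hf1] at hsees
      exact hS1u hsees
    by_cases hf2 : f = s(v,w)
    · rw [hf2, eval_vw]
      rw [hf2] at hsees
      exact hS1w hsees
    by_cases hf4 : f = r2
    · rw [hf4, eval_r2 (fun h => hef3 (hf4.trans h))]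
      rw [hf4] at hsees
      exact hS12 (fun h => hef3 (hf4.trans h.symm)) hsees
    · rw [eval_old f hf1 hf2 hef3 hf4]
      exact (hD1 f (hmemS r1 f hf hf1 hf2 hef3 (sees_symm G hsees)) hf4).symm
  by_cases he4 : e = r2
  · rw [he4] at hsees ⊢
    rw [eval_r2 (fun h => he3 (he4.trans h))]
    have hef4 : f ≠ r2 := fun h => hef (he4.trans h.symm)
    by_cases hf1 : f = s(v,u)
    · rw [hf1, eval_uv]
      rw [hf1] at hsees
      exact hS2u hsees
    by_cases hf2 : f = s(v,w)
    · rw [hf2, eval_vw]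
      rw [hf2] at hsees
      exact hS2w hsees
    by_cases hf3 : f = r1
    · rw [hf3, eval_r1]
      rw [hf3] at hsees
      exact (hS12 (fun h => hef4 (hf3.trans h)) (sees_symm G hsees)).symm
    · rw [eval_old f hf1 hf2 hf3 hef4]
      exact (hD2 f (hmemS r2 f hf hf1 hf2 hef4 (sees_symm G hsees)) hf3).symm
  · have hve : v ∉ e := by
      intro hv
      rcases hvmem e he hv with h | h
      · exact he1 h
      · exact he2 h
    rw [eval_old e he1 he2 he3 he4]
    by_cases hf1 : f = s(v,u)
    · rw [hf1, eval_uv]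
      rw [hf1] at hsees
      exact hA e (hmemS s(v,u) e he he1 he2 he1 hsees) he3 he4
    by_cases hf2 : f = s(v,w)
    · rw [hf2, eval_vw]
      rw [hf2] at hsees
      exact hB e (hmemS s(v,w) e he he1 he2 he2 hsees) he3 he4
    by_cases hf3 : f = r1
    · rw [hf3, eval_r1]
      rw [hf3] at hsees
      exact hD1 e (hmemS r1 e he he1 he2 he3 hsees) he4
    by_cases hf4 : f = r2
    · rw [hf4, eval_r2 (fun h => hf3 (hf4.trans h))]
      rw [hf4] at hsees
      exact hD2 e (hmemS r2 e he he1 he2 he4 hsees) he3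
    · rw [eval_old f hf1 hf2 hf3 hf4]
      have hvf : v ∉ f := by
        intro hv
        rcases hvmem f hf hv with h | h
        · exact hf1 h
        · exact hf2 h
      exact hcV e he f hf hve hvf hef hsees

lemma mem_inc {f : Sym2 V} {a : V} (hf : f ∈ G.edgeSet) (ha : a ∈ f) :
    f ∈ G.incidenceFinset a := by
  rw [SimpleGraph.mem_incidenceFinset]
  exact ⟨hf, ha⟩

lemma mem_nbr {a b : V} (h : G.Adj a b) : b ∈ G.neighborFinset a := by simpa using h

lemma ne_of_not_mem {f : Sym2 V} {a b : V} (h : a ∉ f) : f ≠ s(a,b) :=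
  fun hh => h (hh ▸ Sym2.mem_mk_left a b)

lemma card_erase_inc (a b : V) (hab : G.Adj a b) :
    ((G.incidenceFinset b).erase s(a,b)).card = G.degree b - 1 := by
  rw [card_erase_of_mem, SimpleGraph.card_incidenceFinset_eq_degree]
  exact mem_inc G ((SimpleGraph.mem_edgeSet G).mpr hab) (Sym2.mem_mk_right a b)

lemma cover1 (v u w : V) (hvu : G.Adj v u) (hvw : G.Adj v w)
    (hNv : ∀ x, G.Adj v x → x = u ∨ x = w) :
    seers G v s(v,u) ⊆
      ((G.incidenceFinset u).erase s(v,u) ∪ (G.incidenceFinset w).erase s(v,w)) ∪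
      ((G.neighborFinset u).erase v).biUnion
        (fun x => (G.incidenceFinset x).erase s(u,x)) := by
  intro f hf
  rw [mem_seers] at hf
  obtain ⟨hfE, hvf, hne, a, haf, q, hq, hcase⟩ := hf
  by_cases hufm : u ∈ f
  · exact mem_union_left _ (mem_union_left _ (mem_erase.mpr ⟨hne, mem_inc G hfE hufm⟩))
  rw [Sym2.mem_iff] at hq
  rcases hq with rfl | rfl
  · -- q = v
    rcases hcase with rfl | hadj
    · exact absurd haf hvf
    · rcases hNv a hadj.symm with rfl | rfl
      · exact absurd haf hufm
      · refine mem_union_left _ (mem_union_right _ (mem_erase.mpr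
          ⟨ne_of_not_mem hvf, mem_inc G hfE haf⟩))
  · -- q = u
    rcases hcase with rfl | hadj
    · exact absurd haf hufm
    · refine mem_union_right _ (mem_biUnion.mpr ⟨a, ?_, mem_erase.mpr
        ⟨ne_of_not_mem hufm, mem_inc G hfE haf⟩⟩)
      exact mem_erase.mpr ⟨fun h => hvf (h ▸ haf),
        mem_nbr G hadj.symm⟩

lemma cover2 (v u x1 : V) (hux : G.Adj u x1) (hx1v : x1 ≠ v) :
    seers G v s(u,x1) ⊆
      (((G.incidenceFinset u).erase s(v,u)).erase s(u,x1) ∪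
      ((G.neighborFinset u).erase v).biUnion
        (fun x => (G.incidenceFinset x).erase s(u,x))) ∪
      ((G.neighborFinset x1).erase u).biUnion
        (fun y => (G.incidenceFinset y).erase s(x1,y)) := by
  intro f hf
  rw [mem_seers] at hf
  obtain ⟨hfE, hvf, hne, a, haf, q, hq, hcase⟩ := hf
  by_cases hufm : u ∈ f
  · exact mem_union_left _ (mem_union_left _ (mem_erase.mpr ⟨hne,
      mem_erase.mpr ⟨ne_of_not_mem hvf, mem_inc G hfE hufm⟩⟩))
  by_cases hx1m : x1 ∈ f
  · refine mem_union_left _ (mem_union_right _ (mem_biUnion.mpr ⟨x1,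
      mem_erase.mpr ⟨hx1v, mem_nbr G hux⟩,
      mem_erase.mpr ⟨hne, mem_inc G hfE hx1m⟩⟩))
  rw [Sym2.mem_iff] at hq
  rcases hq with rfl | rfl
  · rcases hcase with rfl | hadj
    · exact absurd haf hufm
    · refine mem_union_left _ (mem_union_right _ (mem_biUnion.mpr ⟨a,
        mem_erase.mpr ⟨fun h => hvf (h ▸ haf),
          mem_nbr G hadj.symm⟩,
        mem_erase.mpr ⟨ne_of_not_mem hufm, mem_inc G hfE haf⟩⟩))
  · rcases hcase with rfl | hadj
    · exact absurd haf hx1m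
    · refine mem_union_right _ (mem_biUnion.mpr ⟨a,
        mem_erase.mpr ⟨fun h => hufm (h ▸ haf),
          mem_nbr G hadj.symm⟩,
        mem_erase.mpr ⟨ne_of_not_mem hx1m, mem_inc G hfE haf⟩⟩)

lemma cover3 (v u x1 y1 : V) (hxy : G.Adj x1 y1)
    (hNx : ∀ c, G.Adj x1 c → c = u ∨ c = y1) :
    seers G v s(x1,y1) ⊆
      ((G.incidenceFinset u).erase s(v,u) ∪ (G.incidenceFinset y1).erase s(x1,y1)) ∪
      ((G.neighborFinset y1).erase x1).biUnion
        (fun z => (G.incidenceFinset z).erase s(y1,z)) := by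
  intro f hf
  rw [mem_seers] at hf
  obtain ⟨hfE, hvf, hne, a, haf, q, hq, hcase⟩ := hf
  by_cases hufm : u ∈ f
  · exact mem_union_left _ (mem_union_left _ (mem_erase.mpr ⟨ne_of_not_mem hvf,
      mem_inc G hfE hufm⟩))
  by_cases hym : y1 ∈ f
  · exact mem_union_left _ (mem_union_right _ (mem_erase.mpr ⟨hne,
      mem_inc G hfE hym⟩))
  have hx1m : x1 ∉ f := by
    intro hx1m
    obtain ⟨t, rfl⟩ := Sym2.mem_iff_exists.mp hx1m
    rcases hNx t ((SimpleGraph.mem_edgeSet G).mp hfE) with rfl | rfl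
    · exact hufm (Sym2.mem_mk_right x1 t)
    · exact hym (Sym2.mem_mk_right x1 t)
  rw [Sym2.mem_iff] at hq
  rcases hq with rfl | rfl
  · rcases hcase with rfl | hadj
    · exact absurd haf hx1m
    · rcases hNx a hadj.symm with rfl | rfl
      · exact absurd haf hufm
      · exact absurd haf hym
  · rcases hcase with rfl | hadj
    · exact absurd haf hym
    · refine mem_union_right _ (mem_biUnion.mpr ⟨a,
        mem_erase.mpr ⟨fun h => hx1m (h ▸ haf),
          mem_nbr G hadj.symm⟩,
        mem_erase.mpr ⟨ne_of_not_mem hym, mem_inc G hfE haf⟩⟩)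

lemma transport (v : V)
    (c0 : Sym2 ((⊤ : G.Subgraph).deleteVerts {v}).verts → Fin 13)
    (hc0 : ((⊤ : G.Subgraph).deleteVerts {v}).coe.IsStrongEdgeColoring c0) :
    ∃ cV : Sym2 V → Fin 13, ∀ e ∈ G.edgeSet, ∀ f ∈ G.edgeSet, v ∉ e → v ∉ f → e ≠ f →
      G.Sees e f → cV e ≠ cV f := by
  classical
  have hmemS : ∀ a : V, a ≠ v → a ∈ ((⊤ : G.Subgraph).deleteVerts {v}).verts := by
    intro a ha
    simp [SimpleGraph.Subgraph.deleteVerts_verts, SimpleGraph.Subgraph.verts_top, ha]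
  have hadjS : ∀ x y : ((⊤ : G.Subgraph).deleteVerts {v}).verts, G.Adj x.1 y.1 →
      ((⊤ : G.Subgraph).deleteVerts {v}).coe.Adj x y := by
    intro x y h
    rw [SimpleGraph.Subgraph.coe_adj, SimpleGraph.Subgraph.deleteVerts_adj]
    refine ⟨trivial, x.2.2, trivial, y.2.2, ?_⟩
    rwa [SimpleGraph.Subgraph.top_adj]
  refine ⟨Sym2.lift ⟨fun a b =>
    if h : a ≠ v ∧ b ≠ v then c0 s(⟨a, hmemS a h.1⟩, ⟨b, hmemS b h.2⟩) else 0, ?_⟩, ?_⟩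
  · intro a b
    dsimp only
    by_cases h : a ≠ v ∧ b ≠ v
    · rw [dif_pos h, dif_pos (And.intro h.2 h.1)]
      exact congrArg c0 Sym2.eq_swap
    · rw [dif_neg h, dif_neg (fun h' => h ⟨h'.2, h'.1⟩)]
  · intro e he f hf hve hvf hef hsees
    revert he hve hef hsees
    induction e using Sym2.ind with | _ a b => ?_
    revert hf hvf
    induction f using Sym2.ind with | _ p q => ?_
    intro hf hvf he hve hef hsees
    have ha : a ≠ v := fun h => hve (h ▸ Sym2.mem_mk_left a b)
    have hb : b ≠ v := fun h => hve (h ▸ Sym2.mem_mk_right a b)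
    have hp : p ≠ v := fun h => hvf (h ▸ Sym2.mem_mk_left p q)
    have hq : q ≠ v := fun h => hvf (h ▸ Sym2.mem_mk_right p q)
    simp only [Sym2.lift_mk]
    rw [dif_pos (And.intro ha hb), dif_pos (And.intro hp hq)]
    have hE1 : s((⟨a, hmemS a ha⟩ : ((⊤ : G.Subgraph).deleteVerts {v}).verts), (⟨b, hmemS b hb⟩ : ((⊤ : G.Subgraph).deleteVerts {v}).verts)) ∈
        ((⊤ : G.Subgraph).deleteVerts {v}).coe.edgeSet :=
      (SimpleGraph.mem_edgeSet _).mpr (hadjS _ _ ((SimpleGraph.mem_edgeSet G).mp he))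
    have hE2 : s((⟨p, hmemS p hp⟩ : ((⊤ : G.Subgraph).deleteVerts {v}).verts), (⟨q, hmemS q hq⟩ : ((⊤ : G.Subgraph).deleteVerts {v}).verts)) ∈
        ((⊤ : G.Subgraph).deleteVerts {v}).coe.edgeSet :=
      (SimpleGraph.mem_edgeSet _).mpr (hadjS _ _ ((SimpleGraph.mem_edgeSet G).mp hf))
    have hne : s((⟨a, hmemS a ha⟩ : ((⊤ : G.Subgraph).deleteVerts {v}).verts), (⟨b, hmemS b hb⟩ : ((⊤ : G.Subgraph).deleteVerts {v}).verts)) ≠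
        s((⟨p, hmemS p hp⟩ : ((⊤ : G.Subgraph).deleteVerts {v}).verts), (⟨q, hmemS q hq⟩ : ((⊤ : G.Subgraph).deleteVerts {v}).verts)) := by
      intro h
      apply hef
      have := congrArg (Sym2.map Subtype.val) h
      simpa using this
    have hsees' : ((⊤ : G.Subgraph).deleteVerts {v}).coe.Sees
        s((⟨a, hmemS a ha⟩ : ((⊤ : G.Subgraph).deleteVerts {v}).verts), (⟨b, hmemS b hb⟩ : ((⊤ : G.Subgraph).deleteVerts {v}).verts))
        s((⟨p, hmemS p hp⟩ : ((⊤ : G.Subgraph).deleteVerts {v}).verts), (⟨q, hmemS q hq⟩ : ((⊤ : G.Subgraph).deleteVerts {v}).verts)) := by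
      obtain ⟨x, hx, y, hy, hcase⟩ := hsees
      rw [Sym2.mem_iff] at hx hy
      have hxv : x ≠ v := by rcases hx with rfl | rfl <;> assumption
      have hyv : y ≠ v := by rcases hy with rfl | rfl <;> assumption
      refine ⟨⟨x, hmemS x hxv⟩, ?_, ⟨y, hmemS y hyv⟩, ?_, ?_⟩
      · rcases hx with rfl | rfl
        · exact Sym2.mem_mk_left _ _
        · exact Sym2.mem_mk_right _ _
      · rcases hy with rfl | rfl
        · exact Sym2.mem_mk_left _ _
        · exact Sym2.mem_mk_right _ _
      · rcases hcase with rfl | hadj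
        · exact Or.inl rfl
        · exact Or.inr (hadjS _ _ hadj)
    exact hc0 _ hE1 _ hE2 hne hsees'

/-- Simple extension lemma: only the two edges at `v` get new colors. -/
lemma extend2
    (v u w : V) (hvu : G.Adj v u) (hvw : G.Adj v w) (huw : u ≠ w)
    (hNv : ∀ x, G.Adj v x → x = u ∨ x = w)
    (cV : Sym2 V → Fin 13)
    (hcV : ∀ e ∈ G.edgeSet, ∀ f ∈ G.edgeSet, v ∉ e → v ∉ f → e ≠ f → G.Sees e f →
      cV e ≠ cV f)
    (A B : Fin 13)
    (hA : ∀ f ∈ seers G v s(v,u), cV f ≠ A)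
    (hB : ∀ f ∈ seers G v s(v,w), cV f ≠ B)
    (hAB : A ≠ B) :
    G.HasStrongColoring 13 := by
  classical
  have hvvu : v ∈ s(v,u) := Sym2.mem_mk_left _ _
  have hvvw : v ∈ s(v,w) := Sym2.mem_mk_left _ _
  have huv_ne_vw : s(v,u) ≠ s(v,w) := by
    intro h
    rw [Sym2.eq_iff] at h
    rcases h with ⟨-, h⟩ | ⟨h, -⟩
    · exact huw h
    · exact hvw.ne' (h ▸ rfl)
  set c' : Sym2 V → Fin 13 := fun e =>
    if e = s(v,u) then A else if e = s(v,w) then B else cV e with hc'def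
  have eval_uv : c' s(v,u) = A := by simp [hc'def]
  have eval_vw : c' s(v,w) = B := by simp [hc'def, huv_ne_vw.symm]
  have eval_old : ∀ f, f ≠ s(v,u) → f ≠ s(v,w) → c' f = cV f := by
    intro f h1 h2; simp [hc'def, h1, h2]
  have hvmem : ∀ f ∈ G.edgeSet, v ∈ f → f = s(v,u) ∨ f = s(v,w) := by
    intro f hfE hvf
    obtain ⟨x, rfl⟩ := Sym2.mem_iff_exists.mp hvf
    rcases hNv x ((SimpleGraph.mem_edgeSet G).mp hfE) with rfl | rfl
    · exact Or.inl rfl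
    · exact Or.inr rfl
  have hmemS : ∀ e0 : Sym2 V, ∀ f ∈ G.edgeSet, f ≠ s(v,u) → f ≠ s(v,w) → f ≠ e0 →
      G.Sees f e0 → f ∈ seers G v e0 := by
    intro e0 f hfE h1 h2 h3 hs
    refine (mem_seers G).mpr ⟨hfE, ?_, h3, hs⟩
    intro hvf
    rcases hvmem f hfE hvf with h | h
    · exact h1 h
    · exact h2 h
  refine ⟨c', ?_⟩
  intro e he f hf hef hsees
  by_cases he1 : e = s(v,u)
  · rw [he1] at hsees ⊢
    rw [eval_uv]
    have hef1 : f ≠ s(v,u) := fun h => hef (he1.trans h.symm)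
    by_cases hf2 : f = s(v,w)
    · rw [hf2, eval_vw]; exact hAB
    · rw [eval_old f hef1 hf2]
      exact (hA f (hmemS s(v,u) f hf hef1 hf2 hef1 (sees_symm G hsees))).symm
  by_cases he2 : e = s(v,w)
  · rw [he2] at hsees ⊢
    rw [eval_vw]
    have hef2 : f ≠ s(v,w) := fun h => hef (he2.trans h.symm)
    by_cases hf1 : f = s(v,u)
    · rw [hf1, eval_uv]; exact hAB.symm
    · rw [eval_old f hf1 hef2]
      exact (hB f (hmemS s(v,w) f hf hf1 hef2 hef2 (sees_symm G hsees))).symm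
  · have hve : v ∉ e := by
      intro hv
      rcases hvmem e he hv with h | h
      · exact he1 h
      · exact he2 h
    rw [eval_old e he1 he2]
    by_cases hf1 : f = s(v,u)
    · rw [hf1, eval_uv]
      rw [hf1] at hsees
      exact hA e (hmemS s(v,u) e he he1 he2 he1 hsees)
    by_cases hf2 : f = s(v,w)
    · rw [hf2, eval_vw]
      rw [hf2] at hsees
      exact hB e (hmemS s(v,w) e he he1 he2 he2 hsees)
    · rw [eval_old f hf1 hf2]
      have hvf : v ∉ f := by
        intro hv
        rcases hvmem f hf hv with h | h
        · exact hf1 h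
        · exact hf2 h
      exact hcV e he f hf hve hvf hef hsees

end StrongAux

lemma arith1 (k d : ℕ) (h1 : 1 ≤ k) (h2 : k ≤ 5) (h3 : 1 ≤ d) (h4 : d ≤ 5) (h5 : k ≠ 4) :
    ((k-1)+(d-1))+(k-1)*(6-k) ≤ 12 := by
  interval_cases k <;> omega

lemma arith2 (k d : ℕ) (h1 : 1 ≤ k) (h2 : k ≤ 5) (h3 : 1 ≤ d) (h4 : d ≤ 5) (h5 : k ≠ 4)
    (h6 : 13 ≤ ((d-1)+(k-1))+(d-1)*(6-d)) : k = 5 ∧ d = 4 := by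
  interval_cases k <;> interval_cases d <;> omega

lemma arith3 (k d : ℕ) (h1 : 1 ≤ k) (h2 : k ≤ 5) (h3 : 1 ≤ d) (h4 : d ≤ 5) (h5 : k ≠ 4)
    (h6 : 12 ≤ ((k-1)+(d-1))+(k-1)*(6-k)) (h7 : 12 ≤ ((d-1)+(k-1))+(d-1)*(6-d)) :
    k = 5 ∧ d = 5 := by
  interval_cases k <;> interval_cases d <;> omega

theorem statement1 {V : Type*} [Fintype V] [DecidableEq V]
    (G : SimpleGraph V) [DecidableRel G.Adj]
    (hore : ∀ u v : V, G.Adj u v → G.degree u + G.degree v ≤ 7)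
    (hG : ¬ G.HasStrongColoring 13)
    (hmin : ∀ H : G.Subgraph, H ≠ ⊤ → H.coe.HasStrongColoring 13) :
    ∀ v : V, G.degree v = 2 → ∀ u : V, G.Adj v u → G.degree u = 4 := by
  classical
  intro v hv2 u hadj
  by_contra hK4
  have hvu : G.Adj v u := hadj
  have huN : u ∈ G.neighborFinset v := StrongAux.mem_nbr G hvu
  have h1 : ((G.neighborFinset v).erase u).card = 1 := by
    rw [Finset.card_erase_of_mem huN]
    rw [show (G.neighborFinset v).card = 2 from hv2]
  obtain ⟨w, hw⟩ := Finset.card_eq_one.mp h1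
  have hwmem : w ∈ (G.neighborFinset v).erase u := by
    rw [hw]; exact Finset.mem_singleton_self w
  have hwu : w ≠ u := (Finset.mem_erase.mp hwmem).1
  have hvw : G.Adj v w := by
    have := (Finset.mem_erase.mp hwmem).2
    rwa [SimpleGraph.mem_neighborFinset] at this
  have hNv : ∀ x, G.Adj v x → x = u ∨ x = w := by
    intro x hx
    by_cases hxu : x = u
    · exact Or.inl hxu
    · right
      have hmem : x ∈ (G.neighborFinset v).erase u :=
        Finset.mem_erase.mpr ⟨hxu, StrongAux.mem_nbr G hx⟩
      rw [hw] at hmem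
      exact Finset.mem_singleton.mp hmem
  -- coloring of G - v
  have hnetop : ((⊤ : G.Subgraph).deleteVerts {v}) ≠ ⊤ := by
    intro h
    have hv' : v ∈ ((⊤ : G.Subgraph).deleteVerts {v}).verts := by
      rw [h, SimpleGraph.Subgraph.verts_top]; trivial
    exact hv'.2 rfl
  obtain ⟨c0, hc0⟩ := hmin _ hnetop
  obtain ⟨cV, hcV⟩ := StrongAux.transport G v c0 hc0
  -- degrees
  have hKle : G.degree u ≤ 5 := by have := hore v u hvu; omega
  have hDle : G.degree w ≤ 5 := by have := hore v w hvw; omega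
  have hK1 : 1 ≤ G.degree u := by
    have : 0 < G.degree u := (G.degree_pos_iff_exists_adj u).mpr ⟨v, hvu.symm⟩
    omega
  have hD1 : 1 ≤ G.degree w := by
    have : 0 < G.degree w := (G.degree_pos_iff_exists_adj w).mpr ⟨v, hvw.symm⟩
    omega
  -- seer sets and their images
  set Tu := StrongAux.seers G v s(v,u) with hTu_def
  set Tw := StrongAux.seers G v s(v,w) with hTw_def
  set Su := Tu.image cV with hSu_def
  set Sw := Tw.image cV with hSw_def
  -- generic biUnion bound
  have hbiU : ∀ (a b : V) (k : ℕ), (∀ x, G.Adj a x → G.degree x - 1 ≤ k) →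
      (((G.neighborFinset a).erase b).biUnion
        (fun x => (G.incidenceFinset x).erase s(a,x))).card ≤
      ((G.neighborFinset a).erase b).card * k := by
    intro a b k hk
    refine le_trans Finset.card_biUnion_le (le_trans
      (Finset.sum_le_card_nsmul _ _ k ?_) (le_of_eq (smul_eq_mul ..)))
    intro x hx
    have hax : G.Adj a x := by
      have := (Finset.mem_erase.mp hx).2
      rwa [SimpleGraph.mem_neighborFinset] at this
    rw [StrongAux.card_erase_inc G a x hax]
    exact hk x hax
  have hNcard_u : ((G.neighborFinset u).erase v).card = G.degree u - 1 := by
    rw [Finset.card_erase_of_mem (StrongAux.mem_nbr G hvu.symm)]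
    rfl
  have hNcard_w : ((G.neighborFinset w).erase v).card = G.degree w - 1 := by
    rw [Finset.card_erase_of_mem (StrongAux.mem_nbr G hvw.symm)]
    rfl
  have hxb_u : ∀ x, G.Adj u x → G.degree x - 1 ≤ 6 - G.degree u := by
    intro x hx; have := hore u x hx; omega
  have hxb_w : ∀ x, G.Adj w x → G.degree x - 1 ≤ 6 - G.degree w := by
    intro x hx; have := hore w x hx; omega
  have hTu_card : Tu.card ≤ ((G.degree u - 1) + (G.degree w - 1)) +
      (G.degree u - 1) * (6 - G.degree u) := by
    refine le_trans (Finset.card_le_card (StrongAux.cover1 G v u w hvu hvw hNv)) ?_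
    refine le_trans (Finset.card_union_le _ _) ?_
    have h2 := le_trans (Finset.card_union_le
      ((G.incidenceFinset u).erase s(v,u)) ((G.incidenceFinset w).erase s(v,w)))
      (le_of_eq (by rw [StrongAux.card_erase_inc G v u hvu, StrongAux.card_erase_inc G v w hvw]))
    have h3 := le_trans (hbiU u v (6 - G.degree u) hxb_u) (le_of_eq (by rw [hNcard_u]))
    omega
  have hTw_card : Tw.card ≤ ((G.degree w - 1) + (G.degree u - 1)) +
      (G.degree w - 1) * (6 - G.degree w) := by
    refine le_trans (Finset.card_le_card
      (StrongAux.cover1 G v w u hvw hvu (fun x hx => (hNv x hx).symm))) ?_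
    refine le_trans (Finset.card_union_le _ _) ?_
    have h2 := le_trans (Finset.card_union_le
      ((G.incidenceFinset w).erase s(v,w)) ((G.incidenceFinset u).erase s(v,u)))
      (le_of_eq (by rw [StrongAux.card_erase_inc G v w hvw, StrongAux.card_erase_inc G v u hvu]))
    have h3 := le_trans (hbiU w v (6 - G.degree w) hxb_w) (le_of_eq (by rw [hNcard_w]))
    omega
  have hSu_le : Su.card ≤ Tu.card := Finset.card_image_le
  have hSw_le : Sw.card ≤ Tw.card := Finset.card_image_le
  have hpick : ∀ s : Finset (Fin 13), s.card ≤ 12 → ∃ α, α ∉ s := by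
    intro s hs
    by_contra h
    push_neg at h
    have hsub : (Finset.univ : Finset (Fin 13)) ⊆ s := fun x _ => h x
    have := Finset.card_le_card hsub
    rw [Finset.card_univ] at this
    simp at this
    omega
  have hnotmem : ∀ a b : V, a ≠ v → b ≠ v → v ∉ s(a,b) := by
    intro a b ha hb h
    rw [Sym2.mem_iff] at h
    rcases h with h | h
    · exact ha h.symm
    · exact hb h.symm
  -- direct two-color extension
  by_cases hdir : ∃ α, α ∉ Su ∧ ∃ β, β ∉ Sw ∧ α ≠ β
  · obtain ⟨α, hα, β, hβ, hαβ⟩ := hdir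
    exact hG (StrongAux.extend2 G v u w hvu hvw (Ne.symm hwu) hNv cV hcV α β
      (fun f hf h => hα (h ▸ Finset.mem_image_of_mem cV hf))
      (fun f hf h => hβ (h ▸ Finset.mem_image_of_mem cV hf)) hαβ)
  push_neg at hdir
  -- pick x1, a neighbor of u other than v (exists since deg u ≥ 2 in all remaining cases)
  -- we postpone this until we know deg u = 5
  by_cases hAw : ∀ β : Fin 13, β ∈ Sw
  · -- CASE I : every color is seen by vw; forces deg u = 5, deg w = 4
    have hSw13 : Sw.card = 13 := by
      have hsub : (Finset.univ : Finset (Fin 13)) ⊆ Sw := fun x _ => hAw x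
      have h13 := Finset.card_le_card hsub
      have h13' := Finset.card_le_univ Sw
      rw [Finset.card_univ] at h13
      simp only [Fintype.card_fin] at h13 h13'
      omega
    have hKD : G.degree u = 5 ∧ G.degree w = 4 := by
      refine arith2 _ _ hK1 hKle hD1 hDle hK4 ?_
      omega
    have hTw13 : Tw.card = 13 := by
      have h1 : 13 ≤ Tw.card := by omega
      have h2 : Tw.card ≤ 13 := by rw [hKD.1, hKD.2] at hTw_card; omega
      omega
    have hinjw : Set.InjOn cV ↑Tw := by
      apply Finset.card_image_iff.mp
      rw [← hSw_def, hSw13, hTw13]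
    -- pick x1
    have hx1ex : ((G.neighborFinset u).erase v).Nonempty := by
      apply Finset.card_pos.mp
      rw [hNcard_u, hKD.1]
      omega
    obtain ⟨x1, hx1⟩ := hx1ex
    have hx1v : x1 ≠ v := (Finset.mem_erase.mp hx1).1
    have hux1 : G.Adj u x1 := by
      have := (Finset.mem_erase.mp hx1).2
      rwa [SimpleGraph.mem_neighborFinset] at this
    have hx1u : x1 ≠ u := hux1.ne'
    have hvux1 : v ∉ s(u,x1) := hnotmem u x1 hvu.ne' hx1v
    have hux1E : s(u,x1) ∈ G.edgeSet := (SimpleGraph.mem_edgeSet G).mpr hux1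
    have hux1Tu : s(u,x1) ∈ Tu := (StrongAux.mem_seers G).mpr
      ⟨hux1E, hvux1, fun h => hvux1 (h ▸ Sym2.mem_mk_left v u),
        ⟨u, Sym2.mem_mk_left u x1, u, Sym2.mem_mk_right v u, Or.inl rfl⟩⟩
    have hux1Tw : s(u,x1) ∈ Tw := (StrongAux.mem_seers G).mpr
      ⟨hux1E, hvux1, fun h => hvux1 (h ▸ Sym2.mem_mk_left v w),
        ⟨u, Sym2.mem_mk_left u x1, v, Sym2.mem_mk_left v w, Or.inr hvu.symm⟩⟩
    set μ := cV s(u,x1) with hμ_def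
    have hμSu : μ ∈ Su := Finset.mem_image_of_mem cV hux1Tu
    -- seers of the edge u-x1
    set Tx := StrongAux.seers G v s(u,x1) with hTx_def
    set Sx := Tx.image cV with hSx_def
    have hx1d1 : 1 ≤ G.degree x1 := by
      have : 0 < G.degree x1 := (G.degree_pos_iff_exists_adj x1).mpr ⟨u, hux1.symm⟩
      omega
    have hx1d2 : G.degree x1 ≤ 2 := by
      have := hore u x1 hux1
      rw [hKD.1] at this
      omega
    have hNcard_x1 : ((G.neighborFinset x1).erase u).card = G.degree x1 - 1 := by
      rw [Finset.card_erase_of_mem (StrongAux.mem_nbr G hux1.symm)]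
      rfl
    have hxb_x1 : ∀ y, G.Adj x1 y → G.degree y - 1 ≤ 6 - G.degree x1 := by
      intro y hy; have := hore x1 y hy; omega
    have hTx_card : Tx.card ≤ ((G.degree u - 1 - 1) + (G.degree u - 1) * (6 - G.degree u)) +
        (G.degree x1 - 1) * (6 - G.degree x1) := by
      refine le_trans (Finset.card_le_card (StrongAux.cover2 G v u x1 hux1 hx1v)) ?_
      refine le_trans (Finset.card_union_le _ _) ?_
      have h2 : (((G.incidenceFinset u).erase s(v,u)).erase s(u,x1)).card =
          G.degree u - 1 - 1 := by
        rw [Finset.card_erase_of_mem, StrongAux.card_erase_inc G v u hvu]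
        refine Finset.mem_erase.mpr ⟨?_, StrongAux.mem_inc G hux1E (Sym2.mem_mk_left u x1)⟩
        exact fun h => hvux1 (h ▸ Sym2.mem_mk_left v u)
      have h3 := Finset.card_union_le
        (((G.incidenceFinset u).erase s(v,u)).erase s(u,x1))
        (((G.neighborFinset u).erase v).biUnion
          (fun x => (G.incidenceFinset x).erase s(u,x)))
      have h4 := le_trans (hbiU x1 u (6 - G.degree x1) hxb_x1) (le_of_eq (by rw [hNcard_x1]))
      have h5 := le_trans (hbiU u v (6 - G.degree u) hxb_u) (le_of_eq (by rw [hNcard_u]))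
      omega
    have hTx11 : Tx.card ≤ 11 := by
      rw [hKD.1] at hTx_card
      interval_cases h : G.degree x1 <;> omega
    have hSx11 : Sx.card ≤ 11 := le_trans Finset.card_image_le hTx11
    -- choose the new colors
    obtain ⟨α, hα⟩ := hpick (Sx ∪ {μ}) (by
      have := Finset.card_union_le Sx ({μ} : Finset (Fin 13))
      rw [Finset.card_singleton] at this
      omega)
    have hαSx : α ∉ Sx := fun h => hα (Finset.mem_union_left _ h)
    have hαμ : α ≠ μ := fun h => hα (Finset.mem_union_right _ (by simp [h]))
    have hSu11 : Su.card ≤ 11 := by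
      have : Tu.card ≤ 11 := by rw [hKD.1, hKD.2] at hTu_card; omega
      omega
    obtain ⟨β, hβ⟩ := hpick (Su ∪ {α}) (by
      have := Finset.card_union_le Su ({α} : Finset (Fin 13))
      rw [Finset.card_singleton] at this
      omega)
    have hβSu : β ∉ Su := fun h => hβ (Finset.mem_union_left _ h)
    have hβα : β ≠ α := fun h => hβ (Finset.mem_union_right _ (by simp [h]))
    refine hG (StrongAux.extend4 G v u w hvu hvw (Ne.symm hwu) hNv cV hcV
      s(u,x1) s(u,x1) hux1E hux1E hvux1 hvux1 β μ α α
      ?_ ?_ ?_ ?_ ?_ ?_ ?_ ?_ ?_ ?_)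
    · exact fun f hf _ _ h => hβSu (h ▸ Finset.mem_image_of_mem cV hf)
    · intro f hf hne _ h
      exact hne (hinjw (Finset.mem_coe.mpr hf) (Finset.mem_coe.mpr hux1Tw) h)
    · exact fun h => hβSu (h ▸ hμSu)
    · exact fun f hf _ h => hαSx (h ▸ Finset.mem_image_of_mem cV hf)
    · exact fun f hf _ h => hαSx (h ▸ Finset.mem_image_of_mem cV hf)
    · exact fun _ => hβα.symm
    · exact fun _ => hαμ
    · exact fun _ => hβα.symm
    · exact fun _ => hαμ
    · exact fun h _ => absurd rfl h
  · -- CASE II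
    push_neg at hAw
    obtain ⟨β0, hβ0⟩ := hAw
    have hSu12' : Su.card ≤ 12 := by
      have := arith1 (G.degree u) (G.degree w) hK1 hKle hD1 hDle hK4
      omega
    obtain ⟨γ, hγu⟩ := hpick Su hSu12'
    have hγw : γ ∉ Sw := by
      have h := hdir γ hγu β0 hβ0
      rwa [h]
    have hAu_all : ∀ α, α ∉ Su → α = γ := fun α hα =>
      (hdir α hα β0 hβ0).trans (hdir γ hγu β0 hβ0).symm
    have hAw_all : ∀ β, β ∉ Sw → β = γ := fun β hβ => (hdir γ hγu β hβ).symm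
    have hSuEq : Su = Finset.univ.erase γ := by
      apply Finset.Subset.antisymm
      · intro x hx
        exact Finset.mem_erase.mpr ⟨fun hxγ => hγu (hxγ ▸ hx), Finset.mem_univ x⟩
      · intro x hx
        by_contra hxx
        exact (Finset.mem_erase.mp hx).1 (hAu_all x hxx)
    have hSwEq : Sw = Finset.univ.erase γ := by
      apply Finset.Subset.antisymm
      · intro x hx
        exact Finset.mem_erase.mpr ⟨fun hxγ => hγw (hxγ ▸ hx), Finset.mem_univ x⟩
      · intro x hx
        by_contra hxx
        exact (Finset.mem_erase.mp hx).1 (hAw_all x hxx)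
    have hSu12 : Su.card = 12 := by
      rw [hSuEq, Finset.card_erase_of_mem (Finset.mem_univ γ), Finset.card_univ]
      simp
    have hSw12 : Sw.card = 12 := by
      rw [hSwEq, Finset.card_erase_of_mem (Finset.mem_univ γ), Finset.card_univ]
      simp
    have hKD : G.degree u = 5 ∧ G.degree w = 5 :=
      arith3 _ _ hK1 hKle hD1 hDle hK4 (by omega) (by omega)
    have hTu12 : Tu.card = 12 := by
      have : Tu.card ≤ 12 := by rw [hKD.1, hKD.2] at hTu_card; omega
      omega
    have hTw12 : Tw.card = 12 := by
      have : Tw.card ≤ 12 := by rw [hKD.1, hKD.2] at hTw_card; omega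
      omega
    have hinju : Set.InjOn cV ↑Tu := Finset.card_image_iff.mp (by rw [← hSu_def, hSu12, hTu12])
    have hinjw : Set.InjOn cV ↑Tw := Finset.card_image_iff.mp (by rw [← hSw_def, hSw12, hTw12])
    -- pick x1
    have hx1ex : ((G.neighborFinset u).erase v).Nonempty := by
      apply Finset.card_pos.mp
      rw [hNcard_u, hKD.1]
      omega
    obtain ⟨x1, hx1⟩ := hx1ex
    have hx1v : x1 ≠ v := (Finset.mem_erase.mp hx1).1
    have hux1 : G.Adj u x1 := by
      have := (Finset.mem_erase.mp hx1).2
      rwa [SimpleGraph.mem_neighborFinset] at this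
    have hx1u : x1 ≠ u := hux1.ne'
    have hvux1 : v ∉ s(u,x1) := hnotmem u x1 hvu.ne' hx1v
    have hux1E : s(u,x1) ∈ G.edgeSet := (SimpleGraph.mem_edgeSet G).mpr hux1
    have hux1Tu : s(u,x1) ∈ Tu := (StrongAux.mem_seers G).mpr
      ⟨hux1E, hvux1, fun h => hvux1 (h ▸ Sym2.mem_mk_left v u),
        ⟨u, Sym2.mem_mk_left u x1, u, Sym2.mem_mk_right v u, Or.inl rfl⟩⟩
    have hux1Tw : s(u,x1) ∈ Tw := (StrongAux.mem_seers G).mpr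
      ⟨hux1E, hvux1, fun h => hvux1 (h ▸ Sym2.mem_mk_left v w),
        ⟨u, Sym2.mem_mk_left u x1, v, Sym2.mem_mk_left v w, Or.inr hvu.symm⟩⟩
    set μ := cV s(u,x1) with hμ_def
    have hμSu : μ ∈ Su := Finset.mem_image_of_mem cV hux1Tu
    have hμγ : μ ≠ γ := fun h => hγu (h ▸ hμSu)
    set Tx := StrongAux.seers G v s(u,x1) with hTx_def
    set Sx := Tx.image cV with hSx_def
    have hx1d1 : 1 ≤ G.degree x1 := by
      have : 0 < G.degree x1 := (G.degree_pos_iff_exists_adj x1).mpr ⟨u, hux1.symm⟩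
      omega
    have hx1d2 : G.degree x1 ≤ 2 := by
      have := hore u x1 hux1
      rw [hKD.1] at this
      omega
    have hNcard_x1 : ((G.neighborFinset x1).erase u).card = G.degree x1 - 1 := by
      rw [Finset.card_erase_of_mem (StrongAux.mem_nbr G hux1.symm)]
      rfl
    have hxb_x1 : ∀ y, G.Adj x1 y → G.degree y - 1 ≤ 6 - G.degree x1 := by
      intro y hy; have := hore x1 y hy; omega
    have hc2' : (((G.incidenceFinset u).erase s(v,u)).erase s(u,x1)).card =
        G.degree u - 1 - 1 := by
      rw [Finset.card_erase_of_mem, StrongAux.card_erase_inc G v u hvu]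
      refine Finset.mem_erase.mpr ⟨?_, StrongAux.mem_inc G hux1E (Sym2.mem_mk_left u x1)⟩
      exact fun h => hvux1 (h ▸ Sym2.mem_mk_left v u)
    have hbu4 : (((G.neighborFinset u).erase v).biUnion
        (fun x => (G.incidenceFinset x).erase s(u,x))).card ≤ 4 := by
      have h5 := le_trans (hbiU u v (6 - G.degree u) hxb_u) (le_of_eq (by rw [hNcard_u]))
      rw [hKD.1] at h5
      omega
    have hTx_card : Tx.card ≤ (G.degree u - 1 - 1) + 4 +
        (((G.neighborFinset x1).erase u).biUnion
          (fun y => (G.incidenceFinset y).erase s(x1,y))).card := by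
      refine le_trans (Finset.card_le_card (StrongAux.cover2 G v u x1 hux1 hx1v)) ?_
      have h1 := Finset.card_union_le
        ((((G.incidenceFinset u).erase s(v,u)).erase s(u,x1)) ∪
          (((G.neighborFinset u).erase v).biUnion
            (fun x => (G.incidenceFinset x).erase s(u,x))))
        (((G.neighborFinset x1).erase u).biUnion
          (fun y => (G.incidenceFinset y).erase s(x1,y)))
      have h2 := Finset.card_union_le
        ((((G.incidenceFinset u).erase s(v,u)).erase s(u,x1)))
        ((((G.neighborFinset u).erase v).biUnion
          (fun x => (G.incidenceFinset x).erase s(u,x))))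
      omega
    have hbx_le : (((G.neighborFinset x1).erase u).biUnion
        (fun y => (G.incidenceFinset y).erase s(x1,y))).card ≤
        (G.degree x1 - 1) * (6 - G.degree x1) := by
      exact le_trans (hbiU x1 u (6 - G.degree x1) hxb_x1) (le_of_eq (by rw [hNcard_x1]))
    have hTx11 : Tx.card ≤ 11 := by
      rw [hKD.1] at hTx_card
      interval_cases h : G.degree x1 <;> omega
    -- route R1
    by_cases hR1 : ∃ α, α ∉ Sx ∧ α ≠ μ ∧ α ≠ γ
    · obtain ⟨α, hαSx, hαμ, hαγ⟩ := hR1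
      refine hG (StrongAux.extend4 G v u w hvu hvw (Ne.symm hwu) hNv cV hcV
        s(u,x1) s(u,x1) hux1E hux1E hvux1 hvux1 γ μ α α ?_ ?_ ?_ ?_ ?_ ?_ ?_ ?_ ?_ ?_)
      · exact fun f hf _ _ h => hγu (h ▸ Finset.mem_image_of_mem cV hf)
      · intro f hf hne _ h
        exact hne (hinjw (Finset.mem_coe.mpr hf) (Finset.mem_coe.mpr hux1Tw) h)
      · exact fun h => hγu (h ▸ hμSu)
      · exact fun f hf _ h => hαSx (h ▸ Finset.mem_image_of_mem cV hf)
      · exact fun f hf _ h => hαSx (h ▸ Finset.mem_image_of_mem cV hf)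
      · exact fun _ => hαγ
      · exact fun _ => hαμ
      · exact fun _ => hαγ
      · exact fun _ => hαμ
      · exact fun h _ => absurd rfl h
    push_neg at hR1
    -- hR1 : ∀ α, α ∉ Sx → α ≠ μ → α = γ
    have hSx_ge : 11 ≤ Sx.card := by
      have hsub : (Finset.univ.erase γ).erase μ ⊆ Sx := by
        intro x hx
        by_contra hxx
        obtain ⟨hxμ', hx2⟩ := Finset.mem_erase.mp hx
        exact (Finset.mem_erase.mp hx2).1 (hR1 x hxx hxμ')
      have hle := Finset.card_le_card hsub
      rw [Finset.card_erase_of_mem (Finset.mem_erase.mpr ⟨hμγ, Finset.mem_univ μ⟩),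
        Finset.card_erase_of_mem (Finset.mem_univ γ), Finset.card_univ] at hle
      simp only [Fintype.card_fin] at hle
      omega
    have hSx_le : Sx.card ≤ Tx.card := Finset.card_image_le
    have hTxEq : Tx.card = 11 := le_antisymm hTx11 (le_trans hSx_ge hSx_le)
    have hSxEq : Sx.card = 11 := le_antisymm (le_trans hSx_le hTx11) hSx_ge
    have hinjx : Set.InjOn cV ↑Tx := Finset.card_image_iff.mp (by rw [← hSx_def, hSxEq, hTxEq])
    -- extract y1
    have hbig : 4 ≤ (((G.neighborFinset x1).erase u).biUnion
        (fun y => (G.incidenceFinset y).erase s(x1,y))).card := by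
      rw [hKD.1] at hTx_card
      omega
    have hdx1 : G.degree x1 = 2 := by
      by_contra hne2
      have hx1one : G.degree x1 = 1 := by omega
      rw [hx1one] at hbx_le
      omega
    have hy1ex : ∃ y1, (G.neighborFinset x1).erase u = {y1} := by
      apply Finset.card_eq_one.mp
      rw [hNcard_x1, hdx1]
    obtain ⟨y1, hy1⟩ := hy1ex
    have hy1mem : y1 ∈ (G.neighborFinset x1).erase u := by
      rw [hy1]; exact Finset.mem_singleton_self y1
    have hy1u : y1 ≠ u := (Finset.mem_erase.mp hy1mem).1
    have hxy : G.Adj x1 y1 := by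
      have := (Finset.mem_erase.mp hy1mem).2
      rwa [SimpleGraph.mem_neighborFinset] at this
    have hdy1 : G.degree y1 = 5 := by
      rw [hy1, Finset.singleton_biUnion, StrongAux.card_erase_inc G x1 y1 hxy] at hbig
      have := hore x1 y1 hxy
      rw [hdx1] at this
      omega
    have hNx1 : ∀ c, G.Adj x1 c → c = u ∨ c = y1 := by
      intro c hc
      by_cases hcu : c = u
      · exact Or.inl hcu
      · right
        have hmem : c ∈ (G.neighborFinset x1).erase u :=
          Finset.mem_erase.mpr ⟨hcu, StrongAux.mem_nbr G hc⟩
        rw [hy1] at hmem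
        exact Finset.mem_singleton.mp hmem
    have hx1w : x1 ≠ w := by
      intro h
      have := hore u w (h ▸ hux1)
      rw [hKD.1, hKD.2] at this
      omega
    have he1E : s(x1,y1) ∈ G.edgeSet := (SimpleGraph.mem_edgeSet G).mpr hxy
    have hy1v : y1 ≠ v := by
      intro h
      rcases hNv x1 (h ▸ hxy).symm with h1 | h1
      · exact hx1u h1
      · exact hx1w h1
    have hve1 : v ∉ s(x1,y1) := hnotmem x1 y1 hx1v hy1v
    have he1Tu : s(x1,y1) ∈ Tu := (StrongAux.mem_seers G).mpr
      ⟨he1E, hve1, fun h => hve1 (h ▸ Sym2.mem_mk_left v u),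
        ⟨x1, Sym2.mem_mk_left x1 y1, u, Sym2.mem_mk_right v u, Or.inr hux1.symm⟩⟩
    have hy1w : y1 ≠ w := by
      intro hyw
      have he1X2 : s(x1,y1) ∈ (G.incidenceFinset w).erase s(v,w) := by
        refine Finset.mem_erase.mpr ⟨fun h => hve1 (h ▸ Sym2.mem_mk_left v w),
          StrongAux.mem_inc G he1E ?_⟩
        rw [← hyw]
        exact Sym2.mem_mk_right x1 y1
      have he1X3 : s(x1,y1) ∈ ((G.neighborFinset u).erase v).biUnion
          (fun x => (G.incidenceFinset x).erase s(u,x)) := by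
        refine Finset.mem_biUnion.mpr ⟨x1, hx1, Finset.mem_erase.mpr
          ⟨?_, StrongAux.mem_inc G he1E (Sym2.mem_mk_left x1 y1)⟩⟩
        intro h
        rw [Sym2.eq_iff] at h
        rcases h with ⟨h1, -⟩ | ⟨-, h2⟩
        · exact hx1u h1
        · exact hy1u h2
      have h12 := Finset.card_le_card (StrongAux.cover1 G v u w hvu hvw hNv)
      rw [Finset.union_assoc] at h12
      have hTu12' : (StrongAux.seers G v s(v,u)).card = 12 := hTu12
      have ha2 := Finset.card_union_le ((G.incidenceFinset u).erase s(v,u))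
        (((G.incidenceFinset w).erase s(v,w)) ∪
          ((G.neighborFinset u).erase v).biUnion (fun x => (G.incidenceFinset x).erase s(u,x)))
      have ha3 := Finset.card_union_add_card_inter ((G.incidenceFinset w).erase s(v,w))
        (((G.neighborFinset u).erase v).biUnion (fun x => (G.incidenceFinset x).erase s(u,x)))
      have ha4 : 1 ≤ (((G.incidenceFinset w).erase s(v,w)) ∩
          (((G.neighborFinset u).erase v).biUnion
            (fun x => (G.incidenceFinset x).erase s(u,x)))).card :=
        Finset.card_pos.mpr ⟨s(x1,y1), Finset.mem_inter.mpr ⟨he1X2, he1X3⟩⟩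
      have hXu : ((G.incidenceFinset u).erase s(v,u)).card = 4 := by
        rw [StrongAux.card_erase_inc G v u hvu, hKD.1]
      have hXw : ((G.incidenceFinset w).erase s(v,w)).card = 4 := by
        rw [StrongAux.card_erase_inc G v w hvw, hKD.2]
      omega
    have hnadj_x1v : ¬ G.Adj x1 v := by
      intro h
      rcases hNv x1 h.symm with h1 | h1
      · exact hx1u h1
      · exact hx1w h1
    have hnadj_x1w : ¬ G.Adj x1 w := by
      intro h
      rcases hNx1 w h with h1 | h1
      · exact hwu h1
      · exact hy1w (h1 ▸ rfl)
    have hnadj_y1v : ¬ G.Adj y1 v := by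
      intro h
      rcases hNv y1 h.symm with h1 | h1
      · exact hy1u h1
      · exact hy1w h1
    have hnadj_y1w : ¬ G.Adj y1 w := by
      intro h
      have := hore y1 w h
      rw [hdy1, hKD.2] at this
      omega
    have hnosee : ¬ G.Sees s(x1,y1) s(v,w) := by
      rintro ⟨a, ha, b, hb, hcase⟩
      rw [Sym2.mem_iff] at ha hb
      rcases ha with rfl | rfl <;> rcases hb with rfl | rfl <;> rcases hcase with h | h
      · exact hx1v h
      · exact hnadj_x1v h
      · exact hx1w h
      · exact hnadj_x1w h
      · exact hy1v h
      · exact hnadj_y1v h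
      · exact hy1w h
      · exact hnadj_y1w h
    have he1_ne_ux1 : s(x1,y1) ≠ s(u,x1) := by
      intro h
      rw [Sym2.eq_iff] at h
      rcases h with ⟨h1, -⟩ | ⟨-, h2⟩
      · exact hx1u h1
      · exact hy1u h2
    have he1Tx : s(x1,y1) ∈ Tx := (StrongAux.mem_seers G).mpr
      ⟨he1E, hve1, he1_ne_ux1,
        ⟨x1, Sym2.mem_mk_left x1 y1, x1, Sym2.mem_mk_right u x1, Or.inl rfl⟩⟩
    set κ := cV s(x1,y1) with hκ_def
    have hκSu : κ ∈ Su := Finset.mem_image_of_mem cV he1Tu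
    have hκγ : κ ≠ γ := fun h => hγu (h ▸ hκSu)
    have hκμ : κ ≠ μ := hcV s(x1,y1) he1E s(u,x1) hux1E hve1 hvux1 he1_ne_ux1
      ⟨x1, Sym2.mem_mk_left x1 y1, x1, Sym2.mem_mk_right u x1, Or.inl rfl⟩
    -- seers of e1
    set Te := StrongAux.seers G v s(x1,y1) with hTe_def
    set Se := Te.image cV with hSe_def
    have hxb_y1 : ∀ z, G.Adj y1 z → G.degree z - 1 ≤ 6 - G.degree y1 := by
      intro z hz; have := hore y1 z hz; omega
    have hNcard_y1 : ((G.neighborFinset y1).erase x1).card = G.degree y1 - 1 := by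
      rw [Finset.card_erase_of_mem (StrongAux.mem_nbr G hxy.symm)]
      rfl
    have hTe_card : Te.card ≤ ((G.degree u - 1) + (G.degree y1 - 1)) +
        (G.degree y1 - 1) * (6 - G.degree y1) := by
      refine le_trans (Finset.card_le_card (StrongAux.cover3 G v u x1 y1 hxy hNx1)) ?_
      refine le_trans (Finset.card_union_le _ _) ?_
      have h2 := Finset.card_union_le ((G.incidenceFinset u).erase s(v,u))
        ((G.incidenceFinset y1).erase s(x1,y1))
      have h3 : ((G.incidenceFinset u).erase s(v,u)).card = G.degree u - 1 :=
        StrongAux.card_erase_inc G v u hvu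
      have h4 : ((G.incidenceFinset y1).erase s(x1,y1)).card = G.degree y1 - 1 :=
        StrongAux.card_erase_inc G x1 y1 hxy
      have h5 := le_trans (hbiU y1 x1 (6 - G.degree y1) hxb_y1)
        (le_of_eq (by rw [hNcard_y1]))
      omega
    have hTe12 : Te.card ≤ 12 := by
      rw [hKD.1, hdy1] at hTe_card
      omega
    have hux1Te : s(u,x1) ∈ Te := (StrongAux.mem_seers G).mpr
      ⟨hux1E, hvux1, Ne.symm he1_ne_ux1,
        ⟨x1, Sym2.mem_mk_right u x1, x1, Sym2.mem_mk_left x1 y1, Or.inl rfl⟩⟩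
    -- route R3
    by_cases hR3 : ∃ δ, δ ∉ Se ∧ δ ≠ κ
    · obtain ⟨δ, hδSe, hδκ⟩ := hR3
      refine hG (StrongAux.extend4 G v u w hvu hvw (Ne.symm hwu) hNv cV hcV
        s(x1,y1) s(x1,y1) he1E he1E hve1 hve1 κ γ δ δ ?_ ?_ ?_ ?_ ?_ ?_ ?_ ?_ ?_ ?_)
      · intro f hf hne _ h
        exact hne (hinju (Finset.mem_coe.mpr hf) (Finset.mem_coe.mpr he1Tu) h)
      · exact fun f hf _ _ h => hγw (h ▸ Finset.mem_image_of_mem cV hf)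
      · exact hκγ
      · exact fun f hf _ h => hδSe (h ▸ Finset.mem_image_of_mem cV hf)
      · exact fun f hf _ h => hδSe (h ▸ Finset.mem_image_of_mem cV hf)
      · exact fun _ => hδκ
      · exact fun hs => (hnosee hs).elim
      · exact fun _ => hδκ
      · exact fun hs => (hnosee hs).elim
      · exact fun h _ => absurd rfl h
    push_neg at hR3
    have hSe_ge : 12 ≤ Se.card := by
      have hsub : Finset.univ.erase κ ⊆ Se := by
        intro x hx
        by_contra hxx
        exact (Finset.mem_erase.mp hx).1 (hR3 x hxx)
      have hle := Finset.card_le_card hsub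
      rw [Finset.card_erase_of_mem (Finset.mem_univ κ), Finset.card_univ] at hle
      simp only [Fintype.card_fin] at hle
      omega
    have hSe_le : Se.card ≤ Te.card := Finset.card_image_le
    have hTeEq : Te.card = 12 := le_antisymm hTe12 (le_trans hSe_ge hSe_le)
    have hSeEq : Se.card = 12 := le_antisymm (le_trans hSe_le hTe12) hSe_ge
    have hinje : Set.InjOn cV ↑Te := Finset.card_image_iff.mp (by rw [← hSe_def, hSeEq, hTeEq])
    -- the swap
    refine hG (StrongAux.extend4 G v u w hvu hvw (Ne.symm hwu) hNv cV hcV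
      s(u,x1) s(x1,y1) hux1E he1E hvux1 hve1 γ μ κ μ ?_ ?_ ?_ ?_ ?_ ?_ ?_ ?_ ?_ ?_)
    · exact fun f hf _ _ h => hγu (h ▸ Finset.mem_image_of_mem cV hf)
    · intro f hf hne _ h
      exact hne (hinjw (Finset.mem_coe.mpr hf) (Finset.mem_coe.mpr hux1Tw) h)
    · exact fun h => hγu (h ▸ hμSu)
    · intro f hf hne h
      exact hne (hinjx (Finset.mem_coe.mpr hf) (Finset.mem_coe.mpr he1Tx) h)
    · intro f hf hne h
      exact hne (hinje (Finset.mem_coe.mpr hf) (Finset.mem_coe.mpr hux1Te) h)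
    · exact fun _ => hκγ
    · exact fun _ => hκμ
    · exact fun _ => hμγ
    · exact fun hs => (hnosee hs).elim
    · exact fun _ _ => hκμ
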